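/- For additively separable hedonic games with arbitrary real weights (declaration domain D = all weight profiles), every scale-independent mechanism is non-obviously manipulable. -/
import Mathlib


noncomputable section

open Finset

/-- A partition of the agents `Fin n`, given by the block (coalition) of each agent. -/
structure HGPartition (n : ℕ) where
  block : Fin n → Finset (Fin n)
  mem_block : ∀ i, i ∈ block i
  block_eq : ∀ i j, j ∈ block i → block j = block i

/-- ASHG utility of an agent with score row `wi` for a coalition `C` containing her. -/
def uA {n : ℕ} (wi : Fin n → ℝ) (C : Finset (Fin n)) : ℝ :=
  ∑ j ∈ C, wi j

/-- FHG utility of an agent with score row `wi` for a coalition `C` containing her. -/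
def uF {n : ℕ} (wi : Fin n → ℝ) (C : Finset (Fin n)) : ℝ :=
  (∑ j ∈ C, wi j) / C.card

/-- Utilitarian social welfare in ASHGs. -/
def swA {n : ℕ} (w : Fin n → Fin n → ℝ) (π : HGPartition n) : ℝ :=
  ∑ i, uA (w i) (π.block i)

/-- Utilitarian social welfare in FHGs. -/
def swF {n : ℕ} (w : Fin n → Fin n → ℝ) (π : HGPartition n) : ℝ :=
  ∑ i, uF (w i) (π.block i)

/-- A weight profile has zero scores on the diagonal. -/
def ZeroDiag {n : ℕ} (w : Fin n → Fin n → ℝ) : Prop := ∀ i, w i i = 0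

/-- Two weight profiles are proportional if their flattened (mutual-sum) weights are
positive multiples of each other. -/
def Proportional {n : ℕ} (w w' : Fin n → Fin n → ℝ) : Prop :=
  ∃ lam : ℝ, 0 < lam ∧ ∀ i j, i ≠ j → w i j + w j i = lam * (w' i j + w' j i)

/-- Scale-independence on the domain of all (zero-diagonal) weight profiles. -/
def SI_arb {n : ℕ} (M : (Fin n → Fin n → ℝ) → HGPartition n) : Prop :=
  ∀ d d' : Fin n → Fin n → ℝ, ZeroDiag d → ZeroDiag d' →
    Proportional d d' → M d = M d'

/-- The set of ASHG utilities (w.r.t. true row `wi`) agent `i` can obtain under `M`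
when declaring `di`, as the others' declarations range over the domain. -/
def utilSetA {n : ℕ} (M : (Fin n → Fin n → ℝ) → HGPartition n)
    (i : Fin n) (wi di : Fin n → ℝ) : Set ℝ :=
  {x : ℝ | ∃ d : Fin n → Fin n → ℝ, ZeroDiag d ∧ d i = di ∧ x = uA wi ((M d).block i)}

/-- Non-obvious manipulability for ASHGs with arbitrary weights. -/
def NOM_A {n : ℕ} (M : (Fin n → Fin n → ℝ) → HGPartition n) : Prop :=
  ∀ (i : Fin n) (wi di : Fin n → ℝ), wi i = 0 → di i = 0 →
    sSup (utilSetA M i wi di) ≤ sSup (utilSetA M i wi wi) ∧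
    sInf (utilSetA M i wi di) ≤ sInf (utilSetA M i wi wi)

theorem SI_implies_NOM_ASHG_arbitrary (n : ℕ)
    (M : (Fin n → Fin n → ℝ) → HGPartition n) (hM : SI_arb M) :
    NOM_A M := by
  have key : ∀ (i : Fin n) (wi a b : Fin n → ℝ), a i = 0 → b i = 0 →
      utilSetA M i wi a ⊆ utilSetA M i wi b := by
    intro i wi a b ha hb x hx
    obtain ⟨d, hd0, hdi, hxeq⟩ := hx
    set d' : Fin n → Fin n → ℝ := fun j k =>
      if j = i then b k else if k = i then d j i + (a j - b j) else d j k with hd'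
    have hzd' : ZeroDiag d' := by
      intro j
      by_cases hj : j = i
      · simp [hd', hj, hb]
      · simp [hd', hj, hd0 j]
    have hprop : Proportional d d' := by
      refine ⟨1, one_pos, ?_⟩
      intro p q hpq
      by_cases hp : p = i
      · subst hp
        have hq := Ne.symm hpq
        simp [hd', hq, hdi]
        ring
      · by_cases hq : q = i
        · subst hq
          simp [hd', hp, hdi]
          ring
        · simp [hd', hp, hq]
    have hMd : M d = M d' := hM d d' hd0 hzd' hprop
    exact ⟨d', hzd', by funext k; simp [hd'], by rw [← hMd]; exact hxeq⟩
  intro i wi di hwi hdi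
  have hset := Set.Subset.antisymm (key i wi di wi hdi hwi) (key i wi wi di hwi hdi)
  rw [hset]
  exact ⟨le_rfl, le_rfl⟩
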